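/- arXiv:2312.11932 — 2 statements merged into one kernel-verified Lean document; each statement's English description precedes it below -/
import Mathlib

section
/- Let N be a finite set and g_a : {0,1}^N → {0,1} monotonic functions for a ∈ N. If there exists a linear order ◁ on N such that the votes can be resolved sequentially (for each a, after substituting the values X_b for all b ◁ a, the function g_a becomes constant), then the resulting X is the unique solution of the system X_a = g_a(X) for all a ∈ N. -/
theorem stmt4 {N : Type} [Fintype N]
    (g : N → (N → Bool) → Bool)
    (hmono : ∀ a, ∀ x y : N → Bool, (∀ i, x i ≤ y i) → g a x ≤ g a y)
    (lt : N → N → Prop) (hlt : IsStrictTotalOrder N lt)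
    (X : N → Bool)
    (hres : ∀ a (Y : N → Bool), (∀ b, lt b a → Y b = X b) → g a Y = X a) :
    (∀ a, X a = g a X) ∧ ∀ Y : N → Bool, (∀ a, Y a = g a Y) → Y = X := by
  haveI := hlt.toIsTrans
  haveI := hlt.toIsStrictOrder.toIrrefl
  have hwf : WellFounded lt := Finite.wellFounded_of_trans_of_irrefl lt
  constructor
  · intro a
    exact (hres a X (fun b _ => rfl)).symm
  · intro Y hY
    funext a
    induction a using hwf.induction with
    | _ a ih =>
      rw [hY a]
      exact hres a Y (fun b hb => ih b hb)
end

section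
/- The MinMax unravelling procedure fails cast monotonicity: there exist a set of agents N with |N| = 7 (or any odd n ≥ 5 plus appropriate padding), ballot profile B, an agent a, alternative d = 1, and the profile B' obtained by changing a's ballot to a direct vote for 1, such that the majority aggregation satisfies 1 ∈ maj(MinMax(B)) but 1 ∉ maj(MinMax(B')). -/
/-- The entry of agent `a`'s ballot selected by certificate `c`. -/
def entry (B : Fin 7 → List (Fin 7 ⊕ Bool)) (c : Fin 7 → ℕ) (a : Fin 7) :
    Fin 7 ⊕ Bool :=
  (B a).getD (c a) (Sum.inr false)

/-- The certificate `c` is consistent for the profile `B`. -/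
def ConsistentS (B : Fin 7 → List (Fin 7 ⊕ Bool)) (c : Fin 7 → ℕ) : Prop :=
  (∀ a, c a < (B a).length) ∧
  ∃ lt : Fin 7 → Fin 7 → Prop, IsStrictTotalOrder (Fin 7) lt ∧
    ∀ a b, entry B c a = Sum.inl b → lt b a

/-- `X` is the collection of concrete votes induced by certificate `c`. -/
def VotesOf (B : Fin 7 → List (Fin 7 ⊕ Bool)) (c : Fin 7 → ℕ)
    (X : Fin 7 → Bool) : Prop :=
  ∀ a, X a = match entry B c a with
    | Sum.inl b => X b
    | Sum.inr d => d

/-- The set of concrete vote vectors obtainable from MinMax certificates. -/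
def MinMaxSet (B : Fin 7 → List (Fin 7 ⊕ Bool)) : Set (Fin 7 → Bool) :=
  {X | ∃ c, ConsistentS B c ∧
    (∀ c', ConsistentS B c' → Finset.univ.sup c ≤ Finset.univ.sup c') ∧
    VotesOf B c X}

/-- Majority aggregation on 7 agents. -/
def maj (X : Fin 7 → Bool) : Bool :=
  decide (4 ≤ (Finset.univ.filter (fun a => X a = true)).card)

/-- The counterexample profile: agent 0 = a, 1 = a', 2 = z, 3–6 = uᵢ. -/
def Bb : Fin 7 → List (Fin 7 ⊕ Bool) :=
![[Sum.inl 1, Sum.inr true], [Sum.inl 0, Sum.inr true], [Sum.inr false],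
  [Sum.inl 2, Sum.inr true], [Sum.inl 2, Sum.inr true],
  [Sum.inl 2, Sum.inr true], [Sum.inl 2, Sum.inr true]]

/-- The profile after agent 0 switches to a direct vote for 1. -/
def Bb' : Fin 7 → List (Fin 7 ⊕ Bool) :=
![[Sum.inr true], [Sum.inl 0, Sum.inr true], [Sum.inr false],
  [Sum.inl 2, Sum.inr true], [Sum.inl 2, Sum.inr true],
  [Sum.inl 2, Sum.inr true], [Sum.inl 2, Sum.inr true]]

theorem stmt17 :
    ∃ (B : Fin 7 → List (Fin 7 ⊕ Bool)) (a : Fin 7),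
      (∃ X ∈ MinMaxSet B, maj X = true) ∧
      ∀ X ∈ MinMaxSet (Function.update B a [Sum.inr true]), maj X ≠ true := by
  refine ⟨Bb, 0, ?_, ?_⟩
  · -- the certificate ![1,0,0,1,1,1,1] is MinMax and yields 6 votes for `true`
    refine ⟨![true,true,false,true,true,true,true], ⟨![1,0,0,1,1,1,1],
      ⟨by decide, (· < ·), inferInstance, by decide⟩, ?_, ?_⟩, by decide⟩
    · -- minimality: no consistent certificate has sup 0
      rintro c' ⟨hlen, lt, hsto, hdel⟩
      have hsup : Finset.univ.sup ![1,0,0,1,1,1,1] = 1 := by decide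
      rw [hsup]
      by_contra h
      push_neg at h
      have hz : ∀ i : Fin 7, c' i = 0 := fun i =>
        Nat.lt_one_iff.mp (lt_of_le_of_lt (Finset.le_sup (Finset.mem_univ i)) h)
      have e0 : entry Bb c' 0 = Sum.inl 1 := by simp [entry, Bb, hz 0]
      have e1 : entry Bb c' 1 = Sum.inl 0 := by simp [entry, Bb, hz 1]
      haveI := hsto
      exact irrefl_of lt 0 (trans_of lt (hdel 1 0 e1) (hdel 0 1 e0))
    · unfold VotesOf entry; decide
  · -- in the updated profile, the all-zero certificate is uniquely minimal
    have hupd : Function.update Bb 0 [Sum.inr true] = Bb' := by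
      funext i; fin_cases i <;> rfl
    rw [hupd]
    rintro X ⟨c, ⟨hlen, lt, hsto, hdel⟩, hmin, hX⟩
    have hc0 : ConsistentS Bb' (fun _ => 0) := by
      refine ⟨by decide, (· < ·), inferInstance, by decide⟩
    have hs := hmin _ hc0
    have hsup0 : Finset.univ.sup (fun _ : Fin 7 => (0:ℕ)) = 0 := by decide
    rw [hsup0, Nat.le_zero] at hs
    have hz : ∀ i : Fin 7, c i = 0 := fun i =>
      Nat.le_zero.mp (hs ▸ Finset.le_sup (Finset.mem_univ i))
    simp only [VotesOf, entry, hz] at hX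
    have h0 : X 0 = true := hX 0
    have h1 : X 1 = X 0 := hX 1
    have h2 : X 2 = false := hX 2
    have h3 : X 3 = X 2 := hX 3
    have h4 : X 4 = X 2 := hX 4
    have h5 : X 5 = X 2 := hX 5
    have h6 : X 6 = X 2 := hX 6
    have hXeq : X = ![true,true,false,false,false,false,false] := by
      clear hX hdel hmin hlen hc0 hs hsup0 hz
      funext i; fin_cases i <;> simp_all <;> rfl
    rw [hXeq]; decide
end
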